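/- Let a, b, c be pairwise coprime positive integers and let F = F(a, b, c) be the Frobenius number of (a, b, c). Suppose F = x·b + y·c for some positive integers x, y, and suppose moreover that x·b = u·a + v·c for some positive integers u, v (so x·b is N-representable by (a, c)). Then x·b is the smallest multiple of b that is N-representable by (a, c); that is, for every positive integer m such that m·b is N-representable by (a, c), one has x ≤ m. -/
import Mathlib


/-- `n` is N-representable by `(a, b)`: `n = x*a + y*b` with `x, y` positive. -/
def Rep2 (a b n : ℕ) : Prop := ∃ x y : ℕ, 0 < x ∧ 0 < y ∧ n = x * a + y * b

/-- `n` is N-representable by `(a, b, c)`. -/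
def Rep3 (a b c n : ℕ) : Prop :=
  ∃ x y z : ℕ, 0 < x ∧ 0 < y ∧ 0 < z ∧ n = x * a + y * b + z * c

theorem least_multiple_representable
    (a b c F : ℕ) (ha : 0 < a) (hb : 0 < b) (hc : 0 < c)
    (hab : Nat.Coprime a b) (hac : Nat.Coprime a c) (hbc : Nat.Coprime b c)
    (hFnotrep : ¬ Rep3 a b c F)
    (hFmax : ∀ n : ℕ, F < n → Rep3 a b c n)
    (x y : ℕ) (hx : 0 < x) (hy : 0 < y) (hF : F = x * b + y * c)
    (u v : ℕ) (hu : 0 < u) (hv : 0 < v) (hxb : x * b = u * a + v * c) :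
    ∀ m : ℕ, 0 < m → Rep2 a c (m * b) → x ≤ m := by
  intro m hm ⟨p, q, hp, hq, hpq⟩
  by_contra h
  push_neg at h
  apply hFnotrep
  refine ⟨p, x - m, q + y, hp, Nat.sub_pos_of_lt h, by omega, ?_⟩
  have hx' : x * b = (x - m) * b + m * b := by
    rw [← Nat.add_mul, Nat.sub_add_cancel h.le]
  rw [hF, hx', hpq]; ring
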